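/- For every k ≥ 1 and every real z with 0 < z < 1, the multiple polylogarithm indexed by the composition (1,1,…,1) with k entries equals (1/k!)·(log(1/(1−z)))^k; that is, Σ_{n_1>n_2>…>n_k>0} z^{n_1}/(n_1 n_2 ⋯ n_k) = (−log(1−z))^k / k!. -/

import Mathlib

/-- The multiple polylogarithm `Li_{s_1,…,s_r}(z) = Σ_{n_1>…>n_r>0} z^{n_1}/(n_1^{s_1}⋯n_r^{s_r})`,
indexed by a list `(s_1,…,s_r)`; the polylogarithm of the empty composition is the
constant function `1`. -/
noncomputable def Li (l : List ℕ) (z : ℝ) : ℝ :=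
  match l with
  | [] => 1
  | s :: t =>
    ∑' f : {f : Fin (s :: t).length → ℕ // StrictAnti f ∧ ∀ i, 0 < f i},
      z ^ (f.1 ⟨0, Nat.succ_pos _⟩) * ∏ i, (1 : ℝ) / (f.1 i : ℝ) ^ ((s :: t).get i)


open Finset Equiv

theorem PF : ∀ (k : ℕ) (x : Fin k → ℝ), (∀ i, 0 < x i) →
    ∑ σ : Equiv.Perm (Fin k), ∏ i, (∑ j ∈ Finset.univ.filter (fun j => i ≤ j), x (σ j))⁻¹
      = ∏ i, (x i)⁻¹ := by
  intro k
  induction k with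
  | zero => simp
  | succ k ih =>
    intro x hx
    have hS : 0 < ∑ j, x j := Finset.sum_pos (fun j _ => hx j) Finset.univ_nonempty
    rw [← Equiv.sum_comp (Equiv.Perm.decomposeFin (n := k)).symm]
    rw [Fintype.sum_prod_type]
    have key : ∀ (p : Fin (k+1)) (e : Equiv.Perm (Fin k)),
        (∏ i, (∑ j ∈ Finset.univ.filter (fun j => i ≤ j),
            x ((Equiv.Perm.decomposeFin.symm (p, e)) j))⁻¹)
        = (∑ j, x j)⁻¹ * ∏ i : Fin k, (∑ j ∈ Finset.univ.filter (fun j => i ≤ j),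
            (fun m : Fin k => x ((Equiv.swap 0 p) m.succ)) (e j))⁻¹ := by
      intro p e
      rw [Fin.prod_univ_succ]
      congr 1
      · congr 1
        rw [show Finset.univ.filter (fun j : Fin (k+1) => 0 ≤ j) = Finset.univ by
          simp [Fin.zero_le]]
        exact Equiv.sum_comp _ x
      · refine Finset.prod_congr rfl fun i _ => ?_
        congr 1
        rw [Finset.sum_filter, Finset.sum_filter, Fin.sum_univ_succ]
        rw [show (if (i.succ : Fin (k+1)) ≤ 0 then x ((Equiv.Perm.decomposeFin.symm (p, e)) 0) else 0) = 0 by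
          simp [Fin.le_def]]
        rw [zero_add]
        refine Finset.sum_congr rfl fun j _ => ?_
        simp only [Fin.succ_le_succ_iff, Equiv.Perm.decomposeFin_symm_apply_succ]
    have inner : ∀ p : Fin (k+1),
        ∑ e : Equiv.Perm (Fin k), ∏ i : Fin k, (∑ j ∈ Finset.univ.filter (fun j => i ≤ j),
            (fun m : Fin k => x ((Equiv.swap 0 p) m.succ)) (e j))⁻¹
        = x p * ∏ j, (x j)⁻¹ := by
      intro p
      rw [ih (fun m : Fin k => x ((Equiv.swap 0 p) m.succ)) (fun m => hx _)]
      have h1 : ∏ j : Fin (k+1), (x ((Equiv.swap 0 p) j))⁻¹ = ∏ j, (x j)⁻¹ :=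
        Equiv.prod_comp (Equiv.swap 0 p) fun j => (x j)⁻¹
      rw [Fin.prod_univ_succ, Equiv.swap_apply_left] at h1
      rw [← h1, ← mul_assoc, mul_inv_cancel₀ (ne_of_gt (hx p)), one_mul]
    have step : ∀ p : Fin (k+1),
        ∑ e : Equiv.Perm (Fin k), ((∑ j, x j)⁻¹ * ∏ i : Fin k, (∑ j ∈ Finset.univ.filter (fun j => i ≤ j),
            (fun m : Fin k => x ((Equiv.swap 0 p) m.succ)) (e j))⁻¹)
        = (∑ j, x j)⁻¹ * (x p * ∏ j, (x j)⁻¹) := by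
      intro p; rw [← Finset.mul_sum, inner p]
    calc ∑ p : Fin (k+1), ∑ e : Equiv.Perm (Fin k),
          ∏ i, (∑ j ∈ Finset.univ.filter (fun j => i ≤ j),
            x ((Equiv.Perm.decomposeFin.symm (p, e)) j))⁻¹
        = ∑ p : Fin (k+1), (∑ j, x j)⁻¹ * (x p * ∏ j, (x j)⁻¹) := by
          refine Finset.sum_congr rfl fun p _ => ?_
          rw [← step p]
          exact Finset.sum_congr rfl fun e _ => key p e
      _ = ∏ j, (x j)⁻¹ := by
          rw [← Finset.mul_sum, ← Finset.sum_mul, ← mul_assoc,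
            inv_mul_cancel₀ (ne_of_gt hS), one_mul]


open Finset in
theorem summable_piProd (g : ℕ → ℝ) (hg : Summable fun n => ‖g n‖) (k : ℕ) :
    Summable (fun f : Fin k → ℕ => ∏ i, ‖g (f i)‖) := by
  induction k with
  | zero => exact Summable.of_finite
  | succ k ih =>
    have hg' : Summable fun n => ‖‖g n‖‖ := by simpa using hg
    have ih' : Summable fun f : Fin k → ℕ => ‖∏ i, ‖g (f i)‖‖ := by
      refine ih.congr fun f => ?_
      rw [Real.norm_eq_abs, abs_of_nonneg (Finset.prod_nonneg fun i _ => norm_nonneg _)]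
    have h := summable_mul_of_summable_norm (R := ℝ) hg' ih'
    have e := Fin.consEquiv (fun _ : Fin (k+1) => ℕ)
    rw [← (Fin.consEquiv (fun _ : Fin (k+1) => ℕ)).summable_iff]
    refine h.congr fun p => ?_
    simp [Fin.consEquiv, Fin.prod_univ_succ]

theorem tsum_piProd (g : ℕ → ℝ) (hg : Summable fun n => ‖g n‖) (k : ℕ) :
    (∑' f : Fin k → ℕ, ∏ i, g (f i)) = (∑' n, g n) ^ k := by
  induction k with
  | zero =>
    simp only [pow_zero, Finset.univ_eq_empty, Finset.prod_empty]
    exact tsum_eq_single (fun i => Fin.elim0 i) (fun b hb => absurd (funext fun i => Fin.elim0 i) hb) |>.trans rfl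
  | succ k ih =>
    have ihs : Summable fun f : Fin k → ℕ => ‖∏ i, g (f i)‖ := by
      refine (summable_piProd g hg k).congr fun f => ?_
      rw [Real.norm_eq_abs, Finset.abs_prod]
      simp [Real.norm_eq_abs]
    rw [pow_succ, mul_comm, ← ih, tsum_mul_tsum_of_summable_norm hg ihs]
    rw [← (Fin.consEquiv (fun _ : Fin (k+1) => ℕ)).tsum_eq]
    refine tsum_congr fun p => ?_
    simp [Fin.consEquiv, Fin.prod_univ_succ]


open Finset

def sfx (K : ℕ) (f : Fin K → ℕ) (i : Fin K) : ℕ :=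
  ∑ j ∈ Finset.univ.filter (fun j => i ≤ j), (f j + 1)

def fext (K : ℕ) (f : Fin K → ℕ) (t : ℕ) : ℕ := if h : t < K then f ⟨t, h⟩ else 0

lemma sfx_eq_ico (K : ℕ) (f : Fin K → ℕ) (n : ℕ) (h : n < K) :
    sfx K f ⟨n, h⟩ = ∑ t ∈ Finset.Ico n K, (fext K f t + 1) := by
  rw [sfx, Finset.sum_filter]
  rw [show (Finset.Ico n K) = (Finset.range K).filter (fun t => n ≤ t) by
    ext t; simp [Finset.mem_Ico, and_comm]]
  rw [Finset.sum_filter, ← Fin.sum_univ_eq_sum_range (fun t => if n ≤ t then fext K f t + 1 else 0) K]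
  refine Finset.sum_congr rfl fun j _ => ?_
  simp only [Fin.le_def, fext, j.isLt, dif_pos, Fin.eta]

lemma sfx_strictAnti (K : ℕ) (f : Fin K → ℕ) : StrictAnti (sfx K f) := by
  intro i i' hlt
  refine Finset.sum_lt_sum_of_subset ?_ (i := i) ?_ ?_ ?_ ?_
  · intro j hj
    simp only [Finset.mem_filter, Finset.mem_univ, true_and] at hj ⊢
    exact le_trans hlt.le hj
  · simp
  · simp [not_le.mpr hlt]
  · omega
  · intros; omega

lemma sfx_pos (K : ℕ) (f : Fin K → ℕ) (i : Fin K) : 0 < sfx K f i := by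
  refine Finset.sum_pos (fun j _ => by omega) ⟨i, by simp⟩

lemma sfx_zero (K : ℕ) (f : Fin K → ℕ) (h : 0 < K) :
    sfx K f ⟨0, h⟩ = ∑ j, (f j + 1) := by
  rw [sfx, show Finset.univ.filter (fun j : Fin K => (⟨0, h⟩ : Fin K) ≤ j) = Finset.univ by
    ext j; simp [Fin.le_def]]

def gext (K : ℕ) (g : Fin K → ℕ) (n : ℕ) : ℕ := if h : n < K then g ⟨n, h⟩ else 0

def invf (K : ℕ) (g : Fin K → ℕ) (i : Fin K) : ℕ :=
  gext K g i.val - gext K g (i.val + 1) - 1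

lemma gext_sfx (K : ℕ) (f : Fin K → ℕ) (n : ℕ) :
    gext K (sfx K f) n = ∑ t ∈ Finset.Ico n K, (fext K f t + 1) := by
  by_cases h : n < K
  · rw [gext, dif_pos h, sfx_eq_ico]
  · rw [gext, dif_neg h, Finset.Ico_eq_empty (by omega), Finset.sum_empty]

lemma left_inv_aux (K : ℕ) (f : Fin K → ℕ) (i : Fin K) : invf K (sfx K f) i = f i := by
  rw [invf, gext_sfx, gext_sfx,
    Finset.sum_eq_sum_Ico_succ_bot i.isLt (fun t => fext K f t + 1)]
  have : fext K f i.val = f i := by simp [fext, i.isLt]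
  omega

lemma right_inv_aux (K : ℕ) (g : Fin K → ℕ) (hg : StrictAnti g) (hpos : ∀ i, 0 < g i) :
    ∀ m n, n + m = K → ∑ t ∈ Finset.Ico n K, (fext K (invf K g) t + 1) = gext K g n := by
  intro m
  induction m with
  | zero =>
    intro n hn
    rw [Finset.Ico_eq_empty (by omega), Finset.sum_empty, gext, dif_neg (by omega)]
  | succ m ih =>
    intro n hn
    have hnK : n < K := by omega
    rw [Finset.sum_eq_sum_Ico_succ_bot hnK, ih (n+1) (by omega)]
    have h1 : fext K (invf K g) n = gext K g n - gext K g (n+1) - 1 := by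
      simp [fext, hnK, invf]
    have h2 : gext K g (n+1) + 1 ≤ gext K g n := by
      by_cases h : n + 1 < K
      · have := hg (show (⟨n, hnK⟩ : Fin K) < ⟨n+1, h⟩ by simp [Fin.lt_def])
        simp only [gext, dif_pos h, dif_pos hnK]
        omega
      · have := hpos ⟨n, hnK⟩
        simp only [gext, dif_neg h, dif_pos hnK]
        omega
    omega

def sfxEquiv (K : ℕ) : (Fin K → ℕ) ≃ {g : Fin K → ℕ // StrictAnti g ∧ ∀ i, 0 < g i} where
  toFun f := ⟨sfx K f, sfx_strictAnti K f, sfx_pos K f⟩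
  invFun G := invf K G.1
  left_inv f := funext fun i => left_inv_aux K f i
  right_inv G := Subtype.ext <| funext fun i => by
    have := right_inv_aux K G.1 G.2.1 G.2.2 (K - i.val) i.val (by omega)
    rw [show (⟨sfx K (invf K G.1), sfx_strictAnti _ _, sfx_pos _ _⟩ :
      {g : Fin K → ℕ // StrictAnti g ∧ ∀ i, 0 < g i}).1 i = sfx K (invf K G.1) i from rfl]
    rw [sfx_eq_ico K _ i.val i.isLt, this, gext, dif_pos i.isLt]

lemma sfxEquiv_coe (K : ℕ) (f : Fin K → ℕ) :
    ((sfxEquiv K f : {g : Fin K → ℕ // StrictAnti g ∧ ∀ i, 0 < g i}) : Fin K → ℕ) = sfx K f := rfl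

theorem main (n : ℕ) (z : ℝ) (hz0 : 0 < z) (hz1 : z < 1) :
    (∑' G : {g : Fin (n+1) → ℕ // StrictAnti g ∧ ∀ i, 0 < g i},
      z ^ (G.1 ⟨0, Nat.succ_pos n⟩) * ∏ i, ((G.1 i : ℝ))⁻¹)
      = Real.log ((1 - z)⁻¹) ^ (n+1) / (Nat.factorial (n+1) : ℝ) := by
  set K := n + 1 with hKdef
  set a : ℕ → ℝ := fun m => z ^ (m+1) / (m+1) with ha_def
  have ha : HasSum a (Real.log ((1-z)⁻¹)) := by
    rw [Real.log_inv]
    exact Real.hasSum_pow_div_log_of_abs_lt_one (by rw [abs_of_pos hz0]; exact hz1)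
  have ha0 : ∀ m, 0 ≤ a m := fun m => div_nonneg (pow_nonneg hz0.le _) (by positivity)
  have hanorm : Summable fun m => ‖a m‖ :=
    ha.summable.congr fun m => (Real.norm_of_nonneg (ha0 m)).symm
  set W : (Fin K → ℕ) → ℝ :=
    fun f => z ^ (∑ j, (f j + 1)) * ∏ i, ((sfx K f i : ℕ) : ℝ)⁻¹ with hW_def
  have hW0 : ∀ f, 0 ≤ W f := by
    intro f
    apply mul_nonneg (pow_nonneg hz0.le _)
    exact Finset.prod_nonneg fun i _ => by positivity
  -- step: each term of the big product sum equals sum over permutations of W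
  have step : ∀ f : Fin K → ℕ, ∏ i, a (f i) = ∑ σ : Equiv.Perm (Fin K), W (f ∘ σ) := by
    intro f
    have e1 : ∏ i, a (f i) = z ^ (∑ j, (f j + 1)) * ∏ i, (((f i + 1 : ℕ)) : ℝ)⁻¹ := by
      rw [← Finset.prod_pow_eq_pow_sum, ← Finset.prod_mul_distrib]
      refine Finset.prod_congr rfl fun i _ => ?_
      show z ^ (f i + 1) / ((f i : ℝ) + 1) = _
      rw [div_eq_mul_inv]
      push_cast
      ring
    have e2 : ∏ i, (((f i + 1 : ℕ)) : ℝ)⁻¹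
        = ∑ σ : Equiv.Perm (Fin K), ∏ i, ((sfx K (f ∘ σ) i : ℕ) : ℝ)⁻¹ := by
      rw [← PF K (fun i => ((f i + 1 : ℕ) : ℝ)) (fun i => by positivity)]
      refine Finset.sum_congr rfl fun σ _ => Finset.prod_congr rfl fun i _ => ?_
      congr 1
      rw [sfx]
      push_cast
      rfl
    rw [e1, e2, Finset.mul_sum]
    refine Finset.sum_congr rfl fun σ _ => ?_
    rw [hW_def]
    congr 2
    exact (Equiv.sum_comp σ (fun j => f j + 1)).symm
  -- summability of the product term
  have hterm : Summable (fun f : Fin K → ℕ => ∏ i, a (f i)) :=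
    (summable_piProd a hanorm K).congr fun f =>
      Finset.prod_congr rfl fun i _ => Real.norm_of_nonneg (ha0 _)
  have hWle : ∀ f, W f ≤ ∏ i, a (f i) := by
    intro f
    rw [step f]
    have : W f = W (f ∘ (1 : Equiv.Perm (Fin K))) := by
      congr 1
    rw [this]
    exact Finset.single_le_sum (f := fun σ : Equiv.Perm (Fin K) => W (f ∘ σ))
      (fun σ _ => hW0 _) (Finset.mem_univ 1)
  have hWs : Summable W := Summable.of_nonneg_of_le hW0 hWle hterm
  have he : ∀ (σ : Equiv.Perm (Fin K)) (f : Fin K → ℕ),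
      (Equiv.arrowCongr σ.symm (Equiv.refl ℕ)) f = f ∘ σ := by
    intro σ f; ext i; simp
  have hWσ : ∀ σ : Equiv.Perm (Fin K), Summable (fun f : Fin K → ℕ => W (f ∘ σ)) := by
    intro σ
    have := ((Equiv.arrowCongr σ.symm (Equiv.refl ℕ)).summable_iff (f := W)).mpr hWs
    refine this.congr fun f => ?_
    show W _ = _
    rw [he σ f]
  have hWσeq : ∀ σ : Equiv.Perm (Fin K), (∑' f : Fin K → ℕ, W (f ∘ σ)) = ∑' f, W f := by
    intro σ
    rw [← (Equiv.arrowCongr σ.symm (Equiv.refl ℕ)).tsum_eq W]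
    refine tsum_congr fun f => ?_
    rw [he σ f]
  -- the chain
  have chain : Real.log ((1 - z)⁻¹) ^ K = (Nat.factorial K : ℝ) * ∑' f, W f := by
    calc Real.log ((1 - z)⁻¹) ^ K = (∑' m, a m) ^ K := by rw [ha.tsum_eq]
      _ = ∑' f : Fin K → ℕ, ∏ i, a (f i) := (tsum_piProd a hanorm K).symm
      _ = ∑' f : Fin K → ℕ, ∑ σ : Equiv.Perm (Fin K), W (f ∘ σ) := tsum_congr step
      _ = ∑ σ : Equiv.Perm (Fin K), ∑' f : Fin K → ℕ, W (f ∘ σ) :=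
          Summable.tsum_finsetSum (fun σ _ => hWσ σ)
      _ = ∑ σ : Equiv.Perm (Fin K), ∑' f, W f := Finset.sum_congr rfl fun σ _ => hWσeq σ
      _ = (Nat.factorial K : ℝ) * ∑' f, W f := by
          rw [Finset.sum_const, Finset.card_univ, Fintype.card_perm, Fintype.card_fin, nsmul_eq_mul]
  -- identify ∑' W with the subtype sum
  have hid : (∑' G : {g : Fin K → ℕ // StrictAnti g ∧ ∀ i, 0 < g i},
      z ^ (G.1 ⟨0, Nat.succ_pos n⟩) * ∏ i, ((G.1 i : ℝ))⁻¹) = ∑' f, W f := by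
    rw [← (sfxEquiv K).tsum_eq (fun G : {g : Fin K → ℕ // StrictAnti g ∧ ∀ i, 0 < g i} =>
      z ^ (G.1 ⟨0, Nat.succ_pos n⟩) * ∏ i, ((G.1 i : ℝ))⁻¹)]
    refine tsum_congr fun f => ?_
    rw [hW_def]
    have hc : ((sfxEquiv K f : {g : Fin K → ℕ // StrictAnti g ∧ ∀ i, 0 < g i}) : Fin K → ℕ) = sfx K f := sfxEquiv_coe K f
    rw [hc, sfx_zero K f (Nat.succ_pos n)]
  rw [hid]
  rw [eq_div_iff (by exact_mod_cast (Nat.factorial_pos K).ne')]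
  rw [chain]; ring

/-- for every `k ≥ 1` and `0 < z < 1`,
`Li_{1,…,1}(z) = (1/k!)·(log(1/(1−z)))^k` (with `k` ones), i.e.
`Σ_{n_1>…>n_k>0} z^{n_1}/(n_1⋯n_k) = (log((1−z)⁻¹))^k / k!`. -/
theorem Li_replicate_one (k : ℕ) (hk : 1 ≤ k) (z : ℝ) (hz0 : 0 < z) (hz1 : z < 1) :
    Li (List.replicate k 1) z = Real.log ((1 - z)⁻¹) ^ k / (Nat.factorial k : ℝ) := by
  obtain ⟨k', rfl⟩ : ∃ k', k = k' + 1 := ⟨k - 1, by omega⟩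
  rw [List.replicate_succ]
  set m : ℕ := (List.replicate k' 1).length with hm
  have hget : ∀ i : Fin (1 :: List.replicate k' 1).length,
      (1 :: List.replicate k' 1).get i = 1 := by
    intro i
    exact List.getElem_replicate (n := k' + 1) (a := 1) i.isLt
  have h1 : Li (1 :: List.replicate k' 1) z
      = ∑' f : {f : Fin (m+1) → ℕ // StrictAnti f ∧ ∀ i, 0 < f i},
        z ^ (f.1 ⟨0, Nat.succ_pos m⟩) * ∏ i, ((f.1 i : ℝ))⁻¹ := by
    rw [Li]
    refine tsum_congr fun f => ?_
    congr 1
    refine Finset.prod_congr rfl fun i _ => ?_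
    rw [hget i, pow_one, one_div]
  rw [h1, main m z hz0 hz1]
  have : m = k' := by simp [hm]
  rw [this]
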